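/- Let N ∈ su(E, Ω) be nilpotent of height m (i.e. N^{m+1} = 0, N^m ≠ 0). Then E admits an N-invariant Ω-orthogonal decomposition E = Y ⊕ Z such that the restriction of N to Y is uniform of height m (all Jordan blocks of N on Y have size m+1) and Z ⊆ ker(N^m). -/

import Mathlib

open Module Submodule

section BCaux

variable {E : Type*} [AddCommGroup E] [Module ℂ E] [FiniteDimensional ℂ E]

/-- Orthogonal decomposition against a finite-dimensional nondegenerate subspace. -/
private lemma bc_ortho_decomp (Ω : E → E → ℂ)
    (hΩadd : ∀ u u' v, Ω (u + u') v = Ω u v + Ω u' v)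
    (hΩsmul : ∀ (a : ℂ) (u v : E), Ω (a • u) v = a * Ω u v)
    (hΩherm : ∀ u v, (starRingEnd ℂ) (Ω u v) = Ω v u)
    (Y : Submodule ℂ E)
    (hnd : ∀ y ∈ Y, (∀ y' ∈ Y, Ω y y' = 0) → y = 0) (w : E) :
    ∃ y ∈ Y, ∀ y' ∈ Y, Ω y' (w - y) = 0 := by
  have hΩsmul₂ : ∀ (a : ℂ) (u v : E), Ω u (a • v) = (starRingEnd ℂ) a * Ω u v := by
    intro a u v
    rw [← hΩherm (a • v) u, hΩsmul, map_mul, hΩherm]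
  have hΩadd₂ : ∀ (u v v' : E), Ω u (v + v') = Ω u v + Ω u v' := by
    intro u v v'
    rw [← hΩherm (v + v') u, hΩadd, map_add, hΩherm, hΩherm]
  -- the real bilinear form
  set Br : LinearMap.BilinForm ℝ E := LinearMap.mk₂ ℝ (fun u v => (Ω u v).re)
    (by intro m m' n; show (Ω (m + m') n).re = (Ω m n).re + (Ω m' n).re
        rw [hΩadd]; simp)
    (by intro c m n; show (Ω ((c : ℂ) • m) n).re = c • (Ω m n).re
        rw [hΩsmul]; simp [Complex.mul_re])
    (by intro m n n'; show (Ω m (n + n')).re = (Ω m n).re + (Ω m n').re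
        rw [hΩadd₂]; simp)
    (by intro c m n; show (Ω m ((c : ℂ) • n)).re = c • (Ω m n).re
        rw [hΩsmul₂]; simp [Complex.mul_re]) with hBr
  have hBrapp : ∀ u v, Br u v = (Ω u v).re := fun u v => rfl
  have hrefl : Br.IsRefl := by
    intro x y h
    rw [hBrapp] at h ⊢
    rw [← hΩherm x y, Complex.conj_re]
    exact h
  -- real orthogonality against y' and I • y' gives complex orthogonality
  have htrick : ∀ y z : E, (Ω y z).re = 0 → (Ω (Complex.I • y) z).re = 0 → Ω y z = 0 := by
    intro y z h1 h2
    rw [hΩsmul] at h2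
    simp only [Complex.mul_re, Complex.I_re, Complex.I_im, zero_mul, one_mul, zero_sub,
      neg_eq_zero] at h2
    exact Complex.ext h1 h2
  set Yr : Submodule ℝ E := Y.restrictScalars ℝ with hYr
  have hndr : (Br.restrict Yr).Nondegenerate := by
    refine (LinearMap.IsRefl.nondegenerate_iff_separatingLeft (B := Br.restrict Yr)
      (fun x y h => hrefl _ _ h)).2 ?_
    rintro ⟨y, hy⟩ h
    have hy' : y ∈ Y := hy
    have : y = 0 := by
      apply hnd y hy'
      intro y'' hy''
      apply htrick
      · exact h ⟨y'', hy''⟩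
      · have h2' : (Ω y (Complex.I • y'')).re = 0 := h ⟨Complex.I • y'', Y.smul_mem _ hy''⟩
        rw [hΩsmul₂] at h2'
        rw [hΩsmul]
        simp only [Complex.conj_I, neg_mul, Complex.neg_re, Complex.mul_re, Complex.I_re,
          Complex.I_im, zero_mul, one_mul, zero_sub, neg_eq_zero, neg_neg] at h2' ⊢
        linarith
    exact Subtype.ext this
  have hcompl := LinearMap.BilinForm.isCompl_orthogonal_of_restrict_nondegenerate hrefl hndr
  have hsup : Yr ⊔ Br.orthogonal Yr = ⊤ := hcompl.sup_eq_top
  have hw : w ∈ Yr ⊔ Br.orthogonal Yr := by rw [hsup]; trivial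
  obtain ⟨y, hy, z, hz, hyz⟩ := Submodule.mem_sup.1 hw
  refine ⟨y, hy, ?_⟩
  intro y' hy'
  have hz' : ∀ y'' ∈ Y, (Ω y'' z).re = 0 := fun y'' h'' => hz y'' h''
  have hwz : w - y = z := by rw [← hyz]; abel
  rw [hwz]
  exact htrick y' z (hz' y' hy') (hz' (Complex.I • y') (Y.smul_mem _ hy'))

end BCaux

theorem stmt7 {E : Type*} [AddCommGroup E] [Module ℂ E] [FiniteDimensional ℂ E]
    (Ω : E → E → ℂ)
    (hΩadd : ∀ u u' v, Ω (u + u') v = Ω u v + Ω u' v)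
    (hΩsmul : ∀ (a : ℂ) (u v : E), Ω (a • u) v = a * Ω u v)
    (hΩherm : ∀ u v, (starRingEnd ℂ) (Ω u v) = Ω v u)
    (hΩnd : ∀ u, (∀ v, Ω u v = 0) → u = 0)
    (N : Module.End ℂ E)
    (hskew : ∀ u v, Ω (N u) v + Ω u (N v) = 0)
    (m : ℕ) (hnil : N ^ (m + 1) = 0) (hht : N ^ m ≠ 0) :
    ∃ Y Z : Submodule ℂ E,
      IsCompl Y Z ∧
      (∀ x ∈ Y, N x ∈ Y) ∧ (∀ x ∈ Z, N x ∈ Z) ∧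
      (∀ y ∈ Y, ∀ z ∈ Z, Ω y z = 0) ∧
      (∀ y ∈ Y, (∀ y' ∈ Y, Ω y y' = 0) → y = 0) ∧
      Submodule.map (N ^ m) Y = LinearMap.ker N ⊓ Y ∧
      Submodule.map (N ^ m) Y ≠ ⊥ ∧
      Z ≤ LinearMap.ker (N ^ m) := by
  classical
  -- derived properties of the form
  have hΩsmul₂ : ∀ (a : ℂ) (u v : E), Ω u (a • v) = (starRingEnd ℂ) a * Ω u v := by
    intro a u v; rw [← hΩherm (a • v) u, hΩsmul, map_mul, hΩherm]
  have hΩadd₂ : ∀ (u v v' : E), Ω u (v + v') = Ω u v + Ω u v' := by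
    intro u v v'; rw [← hΩherm (v + v') u, hΩadd, map_add, hΩherm, hΩherm]
  have hΩzero₁ : ∀ v : E, Ω 0 v = 0 := by
    intro v
    have h := hΩsmul 0 0 v
    simpa using h
  have hΩzero₂ : ∀ u : E, Ω u 0 = 0 := by
    intro u; rw [← hΩherm 0 u, hΩzero₁, map_zero]
  have hsumΩ : ∀ (s : Finset (Fin (m+1))) (f : Fin (m+1) → E) (v : E),
      Ω (∑ i ∈ s, f i) v = ∑ i ∈ s, Ω (f i) v := by
    intro s f v
    induction s using Finset.induction_on with
    | empty => simpa using hΩzero₁ v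
    | @insert a s ha ihs => rw [Finset.sum_insert ha, Finset.sum_insert ha, hΩadd, ihs]
  have hskew' : ∀ u v, Ω u (N v) = -Ω (N u) v := by
    intro u v; have h := hskew u v; linear_combination h
  have hkey : ∀ (t : ℕ) (x : E), (N ^ (t + 1)) x = N ((N ^ t) x) := by
    intro t x; rw [pow_succ']; rfl
  have hcomp : ∀ (s t : ℕ) (x : E), (N ^ s) ((N ^ t) x) = (N ^ (s + t)) x := by
    intro s t x; rw [pow_add]; rfl
  have hNpow : ∀ (j : ℕ) (x y : E), Ω x ((N ^ j) y) = (-1 : ℂ) ^ j * Ω ((N ^ j) x) y := by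
    intro j
    induction j with
    | zero => intro x y; simp
    | succ j ihj =>
      intro x y
      have h1 : (N ^ (j + 1)) y = (N ^ j) (N y) := by rw [pow_succ]; rfl
      rw [h1, ihj x (N y), hskew' ((N ^ j) x) y, hkey j x, pow_succ]
      ring
  have hpow0 : ∀ s : ℕ, m + 1 ≤ s → (N ^ s : Module.End ℂ E) = 0 := by
    intro s hs
    obtain ⟨t, rfl⟩ := Nat.exists_eq_add_of_le hs
    rw [pow_add, hnil, zero_mul]
  have hNiter : ∀ (W : Submodule ℂ E), (∀ x ∈ W, N x ∈ W) →
      ∀ (j : ℕ) (x : E), x ∈ W → (N ^ j) x ∈ W := by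
    intro W hW j
    induction j with
    | zero => intro x hx; simpa using hx
    | succ j ihj =>
      intro x hx
      rw [hkey j x]
      exact hW _ (ihj x hx)
  -- existence of an anisotropic vector for the m-th power pairing
  have hexistsu : ∀ (W : Submodule ℂ E), (∀ x ∈ W, N x ∈ W) →
      (∀ w ∈ W, (∀ w' ∈ W, Ω w w' = 0) → w = 0) →
      ¬ W ≤ LinearMap.ker (N ^ m) → ∃ u ∈ W, Ω ((N ^ m) u) u ≠ 0 := by
    intro W hWN hWnd hWk
    by_contra hcon
    push_neg at hcon
    have hβ : ∀ x ∈ W, ∀ y ∈ W, Ω ((N ^ m) x) y = 0 := by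
      intro x hx y hy
      have hAx : Ω ((N ^ m) x) x = 0 := hcon x hx
      have hBy : Ω ((N ^ m) y) y = 0 := hcon y hy
      have h1 := hcon _ (W.add_mem hx hy)
      rw [map_add, hΩadd, hΩadd₂, hΩadd₂, hAx, hBy] at h1
      have h2 := hcon _ (W.add_mem hx (W.smul_mem Complex.I hy))
      rw [map_add, map_smul, hΩadd, hΩadd₂, hΩadd₂, hΩsmul, hΩsmul₂, hΩsmul₂, hΩsmul,
        hAx, hBy, Complex.conj_I] at h2
      have hI := Complex.I_ne_zero
      have hIsq := Complex.I_sq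
      linear_combination h1 / 2 + Complex.I * h2 / 2 +
        ((Ω ((N ^ m) x) y - Ω ((N ^ m) y) x) / 2) * hIsq
    rw [SetLike.le_def] at hWk
    push_neg at hWk
    obtain ⟨w, hwW, hwk⟩ := hWk
    refine hwk (LinearMap.mem_ker.2 ?_)
    exact hWnd _ (hNiter W hWN m w hwW) (fun w' hw' => hβ w hwW w' hw')
  -- vanishing of coefficients in a cyclic subspace
  have hcoeff : ∀ (u : E), Ω ((N ^ m) u) u ≠ 0 → ∀ (d : ℕ) (a : Fin (m+1) → ℂ),
      (∀ j : ℕ, Ω (∑ k : Fin (m+1), a k • (N ^ ((k : ℕ) + d)) u) ((N ^ j) u) = 0) →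
      ∀ k : Fin (m+1), (k : ℕ) + d ≤ m → a k = 0 := by
    intro u hc d a ha
    suffices H : ∀ (K : ℕ) (k : Fin (m+1)), (k : ℕ) = K → (k : ℕ) + d ≤ m → a k = 0 by
      intro k; exact H k k rfl
    intro K
    induction K using Nat.strong_induction_on with
    | _ K ihK =>
      intro k hkK hkd
      have hsum := ha (m - ((k : ℕ) + d))
      set j := m - ((k : ℕ) + d) with hj
      rw [hsumΩ] at hsum
      have hterm : ∀ k' : Fin (m+1), Ω (a k' • (N ^ ((k' : ℕ) + d)) u) ((N ^ j) u)
          = a k' * ((-1 : ℂ) ^ j * Ω ((N ^ (j + ((k' : ℕ) + d))) u) u) := by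
        intro k'
        rw [hΩsmul, hNpow j ((N ^ ((k' : ℕ) + d)) u) u, hcomp]
      rw [Finset.sum_congr rfl (fun k' _ => hterm k')] at hsum
      have h0 : ∀ b ∈ Finset.univ, b ≠ k →
          a b * ((-1 : ℂ) ^ j * Ω ((N ^ (j + ((b : ℕ) + d))) u) u) = 0 := by
        intro b _ hbk
        have hbk' : (b : ℕ) ≠ (k : ℕ) := fun h => hbk (Fin.ext h)
        rcases lt_or_gt_of_ne hbk' with hlt | hgt
        · rw [ihK (b : ℕ) (by omega) b rfl (by omega)]
          ring
        · have hge : m + 1 ≤ j + ((b : ℕ) + d) := by omega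
          rw [hpow0 _ hge]
          simp [hΩzero₁]
      rw [Finset.sum_eq_single_of_mem k (Finset.mem_univ k) h0] at hsum
      have hjm : j + ((k : ℕ) + d) = m := by omega
      rw [hjm] at hsum
      rcases mul_eq_zero.1 hsum with h | h
      · exact h
      · exact absurd h (mul_ne_zero (pow_ne_zero _ (by norm_num)) hc)
  -- main recursion on dimension
  have hrec : ∀ (n : ℕ) (W : Submodule ℂ E), Module.finrank ℂ W ≤ n → (∀ x ∈ W, N x ∈ W) →
      (∀ w ∈ W, (∀ w' ∈ W, Ω w w' = 0) → w = 0) →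
      ∃ Y Z : Submodule ℂ E, Y ≤ W ∧ Z ≤ W ∧ Y ⊓ Z = ⊥ ∧ Y ⊔ Z = W ∧
        (∀ x ∈ Y, N x ∈ Y) ∧ (∀ x ∈ Z, N x ∈ Z) ∧
        (∀ y ∈ Y, ∀ z ∈ Z, Ω y z = 0) ∧
        (∀ y ∈ Y, (∀ y' ∈ Y, Ω y y' = 0) → y = 0) ∧
        Submodule.map (N ^ m) Y = LinearMap.ker N ⊓ Y ∧
        Z ≤ LinearMap.ker (N ^ m) := by
    intro n
    induction n using Nat.strong_induction_on with
    | _ n ih =>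
    intro W hWn hWN hWnd
    by_cases hWk : W ≤ LinearMap.ker (N ^ m)
    · refine ⟨⊥, W, bot_le, le_rfl, bot_inf_eq W, bot_sup_eq W, ?_, hWN, ?_, ?_, ?_, hWk⟩
      · intro x hx
        rw [Submodule.mem_bot] at hx
        subst hx
        simp
      · intro y hy z hz
        rw [Submodule.mem_bot] at hy
        subst hy
        exact hΩzero₁ z
      · intro y hy _
        exact (Submodule.mem_bot ℂ).1 hy
      · simp
    · obtain ⟨u, huW, hc⟩ := hexistsu W hWN hWnd hWk
      set v : Fin (m + 1) → E := fun k => (N ^ (k : ℕ)) u with hv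
      set Y₁ : Submodule ℂ E := Submodule.span ℂ (Set.range v) with hY₁
      have hvY₁ : ∀ k, v k ∈ Y₁ := fun k => Submodule.subset_span ⟨k, rfl⟩
      have huY₁ : u ∈ Y₁ := by
        have h := hvY₁ 0
        simpa [hv] using h
      have hY₁W : Y₁ ≤ W := by
        rw [hY₁, Submodule.span_le]
        rintro x ⟨k, rfl⟩
        exact hNiter W hWN _ u huW
      have hY₁N : ∀ x ∈ Y₁, N x ∈ Y₁ := by
        intro x hx
        rw [hY₁] at hx
        induction hx using Submodule.span_induction with
        | mem x hxs =>
          obtain ⟨k, rfl⟩ := hxs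
          show N (v k) ∈ Y₁
          have hNv : N (v k) = (N ^ ((k : ℕ) + 1)) u := (hkey (k : ℕ) u).symm
          by_cases hk : (k : ℕ) < m
          · rw [hNv]
            exact hvY₁ ⟨(k : ℕ) + 1, by omega⟩
          · have hkm : (k : ℕ) + 1 = m + 1 := by have := k.isLt; omega
            rw [hNv, hkm, hnil]
            simp
        | zero => simp
        | add x y _ _ hx hy => rw [map_add]; exact Y₁.add_mem hx hy
        | smul a x _ hx => rw [map_smul]; exact Y₁.smul_mem a hx
      have hY₁nd : ∀ y ∈ Y₁, (∀ y' ∈ Y₁, Ω y y' = 0) → y = 0 := by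
        intro y hy hperp
        rw [hY₁] at hy
        obtain ⟨a, ha⟩ := (mem_span_range_iff_exists_fun ℂ).1 hy
        have hall : ∀ j : ℕ, Ω (∑ k : Fin (m+1), a k • (N ^ ((k : ℕ) + 0)) u) ((N ^ j) u) = 0 := by
          intro j
          simp only [Nat.add_zero]
          by_cases hjm : j ≤ m
          · rw [show (∑ k : Fin (m+1), a k • (N ^ (k : ℕ)) u) = y from ha]
            exact hperp _ (hvY₁ ⟨j, by omega⟩)
          · rw [hpow0 j (by omega)]
            simp [hΩzero₂]
        have hz := hcoeff u hc 0 a hall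
        have haz : ∀ k : Fin (m+1), a k = 0 := fun k => hz k (by have := k.isLt; omega)
        rw [← ha]
        exact Finset.sum_eq_zero (fun k _ => by rw [haz k, zero_smul])
      have hY₁map : Submodule.map (N ^ m) Y₁ = LinearMap.ker N ⊓ Y₁ := by
        apply le_antisymm
        · rintro _ ⟨x, hx, rfl⟩
          refine ⟨LinearMap.mem_ker.2 ?_, hNiter Y₁ hY₁N m x hx⟩
          rw [← hkey m x, hnil]
          rfl
        · rintro x ⟨hxk, hxY⟩
          rw [hY₁] at hxY
          obtain ⟨a, ha⟩ := (mem_span_range_iff_exists_fun ℂ).1 hxY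
          have hNx : ∑ k : Fin (m+1), a k • (N ^ ((k : ℕ) + 1)) u = 0 := by
            have hx1 : N x = ∑ k : Fin (m+1), a k • (N ^ ((k : ℕ) + 1)) u := by
              rw [← ha, map_sum]
              exact Finset.sum_congr rfl (fun k _ => by
                rw [map_smul, hkey])
            rw [← hx1]
            exact LinearMap.mem_ker.1 hxk
          have hz : ∀ k : Fin (m+1), (k : ℕ) + 1 ≤ m → a k = 0 := by
            intro k hk
            refine hcoeff u hc 1 a (fun j => ?_) k hk
            rw [hNx, hΩzero₁]
          have hx' : x = a (Fin.last m) • (N ^ m) u := by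
            rw [← ha]
            rw [Finset.sum_eq_single_of_mem (Fin.last m) (Finset.mem_univ _)
              (fun b _ hb => ?_)]
            · rw [hv]
              simp [Fin.val_last]
            · have hbm : (b : ℕ) + 1 ≤ m := by
                have h1 := b.isLt
                have h2 : (b : ℕ) ≠ m := fun h => hb (Fin.ext (by simp [Fin.val_last, h]))
                omega
              rw [hz b hbm, zero_smul]
          refine ⟨a (Fin.last m) • u, Y₁.smul_mem _ huY₁, ?_⟩
          rw [map_smul, ← hx']
      -- the orthogonal complement of Y₁ in W
      set P : Submodule ℂ E :=
        { carrier := {x | ∀ y ∈ Y₁, Ω y x = 0}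
          add_mem' := by
            intro a b ha hb y hy
            rw [hΩadd₂, ha y hy, hb y hy, add_zero]
          zero_mem' := by intro y hy; exact hΩzero₂ y
          smul_mem' := by
            intro c x hx y hy
            rw [hΩsmul₂, hx y hy, mul_zero] } with hP
      have hPmem : ∀ x : E, x ∈ P ↔ ∀ y ∈ Y₁, Ω y x = 0 := fun x => Iff.rfl
      set Z₁ : Submodule ℂ E := W ⊓ P with hZ₁
      have hZ₁W : Z₁ ≤ W := inf_le_left
      have hsplit : Y₁ ⊔ Z₁ = W := by
        apply le_antisymm (sup_le hY₁W hZ₁W)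
        intro w hw
        obtain ⟨y, hyY, hperp⟩ := bc_ortho_decomp Ω hΩadd hΩsmul hΩherm Y₁ hY₁nd w
        refine Submodule.mem_sup.2 ⟨y, hyY, w - y,
          ⟨W.sub_mem hw (hY₁W hyY), (hPmem _).2 hperp⟩, by abel⟩
      have hdisj : Y₁ ⊓ Z₁ = ⊥ := by
        rw [eq_bot_iff]
        rintro x ⟨hxY, _, hxP⟩
        rw [Submodule.mem_bot]
        apply hY₁nd x hxY
        intro y' hy'
        rw [← hΩherm y' x, (hPmem x).1 hxP y' hy', map_zero]
      have hZ₁N : ∀ x ∈ Z₁, N x ∈ Z₁ := by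
        rintro x ⟨hxW, hxP⟩
        refine ⟨hWN x hxW, (hPmem _).2 (fun y hy => ?_)⟩
        rw [hskew' y x, (hPmem x).1 hxP (N y) (hY₁N y hy), neg_zero]
      have hZ₁nd : ∀ z ∈ Z₁, (∀ z' ∈ Z₁, Ω z z' = 0) → z = 0 := by
        intro z hz hperp
        apply hWnd z (hZ₁W hz)
        intro w hw
        rw [← hsplit] at hw
        obtain ⟨y, hyY, z', hz', rfl⟩ := Submodule.mem_sup.1 hw
        rw [hΩadd₂, hperp z' hz']
        have : Ω z y = 0 := by
          rw [← hΩherm y z, (hPmem z).1 hz.2 y hyY, map_zero]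
        rw [this, add_zero]
      have hune : u ≠ 0 := by
        intro h
        apply hc
        rw [h, hΩzero₂]
      have hY₁pos : 0 < Module.finrank ℂ Y₁ := by
        rw [Module.finrank_pos_iff]
        exact ⟨⟨⟨u, huY₁⟩, 0, fun h => hune (by simpa using congrArg Subtype.val h)⟩⟩
      have hrk := Submodule.finrank_sup_add_finrank_inf_eq Y₁ Z₁
      rw [hsplit, hdisj, finrank_bot, add_zero] at hrk
      have hZ₁n : Module.finrank ℂ Z₁ < n := by omega
      obtain ⟨Y₂, Z₂, p1, p2, p3, p4, p5, p6, p7, p8, p9, p10⟩ :=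
        ih (Module.finrank ℂ Z₁) hZ₁n Z₁ le_rfl hZ₁N hZ₁nd
      refine ⟨Y₁ ⊔ Y₂, Z₂, sup_le hY₁W (p1.trans hZ₁W), p2.trans hZ₁W, ?_, ?_, ?_, ?_, ?_, ?_, ?_, p10⟩
      · -- (Y₁ ⊔ Y₂) ⊓ Z₂ = ⊥
        rw [eq_bot_iff]
        rintro x ⟨hxY, hxZ⟩
        obtain ⟨y₁, hy₁, y₂, hy₂, hxe⟩ := Submodule.mem_sup.1 hxY
        have hy₁' : y₁ ∈ Y₁ ⊓ Z₁ := by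
          refine ⟨hy₁, ?_⟩
          have : y₁ = x - y₂ := by rw [← hxe]; abel
          rw [this]
          exact Z₁.sub_mem (p2 hxZ) (p1 hy₂)
        rw [hdisj, Submodule.mem_bot] at hy₁'
        have hxy₂ : x = y₂ := by rw [← hxe, hy₁', zero_add]
        have : x ∈ Y₂ ⊓ Z₂ := ⟨hxy₂ ▸ hy₂, hxZ⟩
        rw [p3, Submodule.mem_bot] at this
        simpa using this
      · -- sup
        rw [sup_assoc, p4, hsplit]
      · -- N-invariance of Y₁ ⊔ Y₂
        intro x hx
        obtain ⟨y₁, hy₁, y₂, hy₂, hxe⟩ := Submodule.mem_sup.1 hx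
        refine Submodule.mem_sup.2 ⟨N y₁, hY₁N y₁ hy₁, N y₂, p5 y₂ hy₂, ?_⟩
        rw [← hxe, map_add]
      · exact p6
      · -- orthogonality
        intro y hy z hz
        obtain ⟨y₁, hy₁, y₂, hy₂, hye⟩ := Submodule.mem_sup.1 hy
        have h1 : Ω y₁ z = 0 := (hPmem z).1 (p2 hz).2 y₁ hy₁
        have h2 : Ω y₂ z = 0 := p7 y₂ hy₂ z hz
        rw [← hye, hΩadd, h1, h2, add_zero]
      · -- nondegeneracy on Y₁ ⊔ Y₂
        intro y hy hperp
        obtain ⟨y₁, hy₁, y₂, hy₂, hye⟩ := Submodule.mem_sup.1 hy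
        have hy₁0 : y₁ = 0 := by
          apply hY₁nd y₁ hy₁
          intro y' hy'
          have e : Ω (y₁ + y₂) y' = Ω y₁ y' + Ω y₂ y' := hΩadd y₁ y₂ y'
          rw [hye] at e
          have e1 : Ω y y' = 0 := hperp y' (le_sup_left (a := Y₁) (b := Y₂) hy')
          have e2 : Ω y₂ y' = 0 := by
            rw [← hΩherm y' y₂, (hPmem y₂).1 (p1 hy₂).2 y' hy', map_zero]
          rw [e1, e2, add_zero] at e
          exact e.symm
        have hyy₂ : y = y₂ := by rw [← hye, hy₁0, zero_add]
        rw [hyy₂]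
        apply p8 y₂ hy₂
        intro y' hy'
        rw [← hyy₂]
        exact hperp y' (le_sup_right (a := Y₁) (b := Y₂) hy')
      · -- map (N ^ m)
        rw [Submodule.map_sup, hY₁map, p9]
        apply le_antisymm
        · exact sup_le (le_inf inf_le_left (inf_le_right.trans le_sup_left))
            (le_inf inf_le_left (inf_le_right.trans le_sup_right))
        · rintro x ⟨hxk, hxY⟩
          obtain ⟨y₁, hy₁, y₂, hy₂, hxe⟩ := Submodule.mem_sup.1 hxY
          have hNsum : N y₁ + N y₂ = 0 := by
            rw [← map_add, hxe]
            exact LinearMap.mem_ker.1 hxk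
          have hNy₁ : N y₁ ∈ Y₁ ⊓ Z₁ := by
            refine ⟨hY₁N y₁ hy₁, ?_⟩
            have : N y₁ = -(N y₂) := by linear_combination (norm := module) hNsum
            rw [this]
            exact Z₁.neg_mem (p1 (p5 y₂ hy₂))
          rw [hdisj, Submodule.mem_bot] at hNy₁
          have hNy₂ : N y₂ = 0 := by
            rw [hNy₁, zero_add] at hNsum
            exact hNsum
          exact Submodule.mem_sup.2 ⟨y₁, ⟨LinearMap.mem_ker.2 hNy₁, hy₁⟩,
            y₂, ⟨LinearMap.mem_ker.2 hNy₂, hy₂⟩, hxe⟩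
  -- conclude
  obtain ⟨Y, Z, q1, q2, q3, q4, q5, q6, q7, q8, q9, q10⟩ :=
    hrec (Module.finrank ℂ E) ⊤ (le_of_eq (finrank_top ℂ E)) (fun x _ => Submodule.mem_top)
      (fun w _ h => hΩnd w (fun v => h v Submodule.mem_top))
  refine ⟨Y, Z, ⟨disjoint_iff.2 q3, codisjoint_iff.2 q4⟩, q5, q6, q7, q8, q9, ?_, q10⟩
  intro hbot
  have hYker : Y ≤ LinearMap.ker (N ^ m) := by
    intro x hx
    rw [LinearMap.mem_ker]
    have : (N ^ m) x ∈ Submodule.map (N ^ m) Y := ⟨x, hx, rfl⟩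
    rw [hbot, Submodule.mem_bot] at this
    exact this
  apply hht
  apply LinearMap.ker_eq_top.1
  rw [eq_top_iff, ← q4]
  exact sup_le hYker q10
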